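/- Let G be a finite graph and e an edge of G with ends x and y. Let G_{•e} be the graph obtained from G by subdividing e once (inserting one new vertex on e), and let G_{−e} be the graph obtained from G − e by attaching one new pendant edge at x and one new pendant edge at y (with two distinct new pendant vertices). Then t(L(G_{•e})) = t(L(G)) + t(L(G_{−e})). In particular, if e is a bridge of G then t(L(G_{•e})) = t(L(G)). -/

import Mathlib

open SimpleGraph Finset

variable {V : Type*}

/-- The number of spanning trees of a graph `G`. -/
noncomputable def treeCount (G : SimpleGraph V) : ℕ :=
  Nat.card {H : SimpleGraph V // H ≤ G ∧ H.IsTree}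

/-- The number of spanning trees of `G` containing all edges of `H`. -/
noncomputable def treeCountContaining (G H : SimpleGraph V) : ℕ :=
  Nat.card {T : SimpleGraph V // T ≤ G ∧ H ≤ T ∧ T.IsTree}

/-- The symmetric function `e ↦ 1/d(u_e) + 1/d(v_e)`. -/
noncomputable def invDegSum [Fintype V] (G : SimpleGraph V) [DecidableRel G.Adj] :
    Sym2 V → ℚ :=
  Sym2.lift ⟨fun u v => (G.degree u : ℚ)⁻¹ + (G.degree v : ℚ)⁻¹, fun u v => add_comm _ _⟩

/-- The graph obtained from `G` by replacing each edge of `F` by a path of length `r+1`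
joining its two ends (inserting `r` new internal vertices on each such edge).
The internal vertex at distance `i` from `u` on the path replacing the edge `uv`
is represented by the unordered pair `{(u, i), (v, r+1-i)}`. -/
def SrOn (G : SimpleGraph V) (F : Set (Sym2 V)) (r : ℕ) :
    SimpleGraph (V ⊕ {p : Sym2 (V × ℕ) //
      ∃ u v i, G.Adj u v ∧ s(u, v) ∈ F ∧ 1 ≤ i ∧ i ≤ r ∧ p = s((u, i), (v, r + 1 - i))}) :=
  SimpleGraph.fromRel fun x y =>
    match x, y with
    | Sum.inl u, Sum.inl v => G.Adj u v ∧ (s(u, v) ∉ F ∨ r = 0)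
    | Sum.inl u, Sum.inr p => ∃ v, G.Adj u v ∧ s(u, v) ∈ F ∧
        (p : Sym2 (V × ℕ)) = s((u, 1), (v, r))
    | Sum.inr p, Sum.inr q => ∃ u v i, G.Adj u v ∧ s(u, v) ∈ F ∧ 1 ≤ i ∧ i + 1 ≤ r ∧
        (p : Sym2 (V × ℕ)) = s((u, i), (v, r + 1 - i)) ∧
        (q : Sym2 (V × ℕ)) = s((u, i + 1), (v, r - i))
    | Sum.inr _, Sum.inl _ => False

/-- `S_r(G)`: every edge of `G` is replaced by a path of length `r+1`. -/
def Sr (G : SimpleGraph V) (r : ℕ) := SrOn G Set.univ r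

/-- `G_{-E'}`: delete the edges of `E'` and attach a new pendant edge at each end of each
deleted edge (one new pendant vertex per edge-end incidence). -/
def pendantize (G : SimpleGraph V) (E' : Set (Sym2 V)) :
    SimpleGraph (V ⊕ {p : Sym2 V × V // p.1 ∈ E' ∧ p.2 ∈ p.1}) :=
  SimpleGraph.fromRel fun x y =>
    match x, y with
    | Sum.inl u, Sum.inl v => G.Adj u v ∧ s(u, v) ∉ E'
    | Sum.inl u, Sum.inr p => (p : Sym2 V × V).2 = u
    | _, _ => False

/-- `G_{•e}`: subdivide the edge `xy` once. -/
def subdivideOnce (G : SimpleGraph V) (x y : V) : SimpleGraph (V ⊕ Unit) :=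
  SimpleGraph.fromRel fun a b =>
    match a, b with
    | Sum.inl u, Sum.inl v => G.Adj u v ∧ s(u, v) ≠ s(x, y)
    | Sum.inl u, Sum.inr _ => u = x ∨ u = y
    | _, _ => False

/-- `G_{r•e}`: replace the edge `xy` by a path of length `r+1` (insert `r` new vertices). -/
def subdividePath (G : SimpleGraph V) (x y : V) (r : ℕ) : SimpleGraph (V ⊕ Fin r) :=
  SimpleGraph.fromRel fun a b =>
    match a, b with
    | Sum.inl u, Sum.inl v => G.Adj u v ∧ (s(u, v) ≠ s(x, y) ∨ r = 0)
    | Sum.inl u, Sum.inr i => (u = x ∧ (i : ℕ) = 0) ∨ (u = y ∧ (i : ℕ) = r - 1)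
    | Sum.inr i, Sum.inr j => (j : ℕ) = (i : ℕ) + 1
    | Sum.inr _, Sum.inl _ => False

/-- The clique-inserted graph `C(G)`: its vertices are the darts of `G`; the vertex of the
clique at `u` indexed by an edge `e` incident with `u` is the dart of `e` starting at `u`. -/
def cliqueInserted (G : SimpleGraph V) : SimpleGraph G.Dart where
  Adj d d' := d ≠ d' ∧ (d.toProd.1 = d'.toProd.1 ∨ d.edge = d'.edge)
  symm := ⟨fun d d' h => ⟨h.1.symm, h.2.imp Eq.symm Eq.symm⟩⟩
  loopless := ⟨fun d h => h.1 rfl⟩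

section Abstract
variable {A A' : Type*}

private lemma reach_push {S : SimpleGraph A} {S' : SimpleGraph A'} {f : A → A'}
    (h : ∀ u v, S.Adj u v → f u = f v ∨ S'.Adj (f u) (f v)) {u v : A}
    (hr : S.Reachable u v) : S'.Reachable (f u) (f v) := by
  obtain ⟨w⟩ := hr
  induction w with
  | nil => exact Reachable.refl _
  | cons ha p ih =>
      rcases h _ _ ha with h1 | h1
      · rw [h1]; exact ih
      · exact h1.reachable.trans ih

private lemma reach_lift {S : SimpleGraph A} {S' : SimpleGraph A'} {f : A → A'}
    (hfib : ∀ u v, f u = f v → S.Reachable u v)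
    (hedge : ∀ p q, S'.Adj p q → ∃ u v, f u = p ∧ f v = q ∧ S.Reachable u v)
    {p q : A'} (hr : S'.Reachable p q) :
    ∀ u v, f u = p → f v = q → S.Reachable u v := by
  obtain ⟨w⟩ := hr
  induction w with
  | nil => exact fun u v h1 h2 => hfib u v (h1.trans h2.symm)
  | cons ha wk ih =>
      intro u v h1 h2
      obtain ⟨u₀, v₀, hu₀, hv₀, hr₀⟩ := hedge _ _ ha
      exact ((hfib u u₀ (by rw [h1, hu₀])).trans hr₀).trans (ih v₀ v hv₀ h2)

private lemma nat_card_split {α : Type*} [Finite α] (P Q : α → Prop) :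
    Nat.card {x : α // P x} =
      Nat.card {x : α // P x ∧ Q x} + Nat.card {x : α // P x ∧ ¬ Q x} := by
  classical
  rw [← Nat.card_sum]
  exact Nat.card_congr ((Equiv.sumCompl fun x : {x // P x} => Q x.1).symm.trans
    (Equiv.sumCongr (Equiv.subtypeSubtypeEquivSubtypeInter P Q)
      (Equiv.subtypeSubtypeEquivSubtypeInter P fun x => ¬ Q x)))

private lemma sdiff_single_adj (S : SimpleGraph A) (z : Sym2 A) (u v : A) :
    (S \ fromEdgeSet {z}).Adj u v ↔ S.Adj u v ∧ s(u, v) ≠ z := by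
  rw [sdiff_adj, fromEdgeSet_adj]
  constructor
  · rintro ⟨h1, h2⟩
    exact ⟨h1, fun hE => h2 ⟨by simp [hE], h1.ne⟩⟩
  · rintro ⟨h1, h2⟩
    exact ⟨h1, fun h => h2 (by simpa using h.1)⟩

private lemma connected_transfer (ψ : A ≃ A') (T : SimpleGraph A) (T' : SimpleGraph A')
    (h : ∀ u v, T.Adj u v ↔ T'.Adj (ψ u) (ψ v)) (hT : T.Connected) : T'.Connected := by
  haveI : Nonempty A' := Nonempty.map ψ hT.nonempty
  refine ⟨fun p q => ?_⟩
  have := reach_push (S := T) (S' := T') (f := ψ)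
    (fun u v huv => Or.inr ((h u v).1 huv)) (hT.preconnected (ψ.symm p) (ψ.symm q))
  simpa using this

private lemma acyclic_transfer (ψ : A ≃ A') (T : SimpleGraph A) (T' : SimpleGraph A')
    (h : ∀ u v, T.Adj u v ↔ T'.Adj (ψ u) (ψ v)) (hT : T.IsAcyclic) : T'.IsAcyclic := by
  rw [isAcyclic_iff_forall_adj_isBridge] at hT ⊢
  intro p q hpq
  rw [isBridge_iff]
  refine fun hreach => ?_
  have hadj : T.Adj (ψ.symm p) (ψ.symm q) := by rw [h]; simpa using hpq
  have hb := hT hadj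
  rw [isBridge_iff] at hb
  refine hb ?_
  have := reach_push (S := T' \ fromEdgeSet {s(p, q)})
      (S' := T \ fromEdgeSet {s(ψ.symm p, ψ.symm q)}) (f := ψ.symm) ?_ hreach
  · exact this
  · intro u v huv
    rw [sdiff_single_adj] at huv
    rw [sdiff_single_adj]
    refine Or.inr ⟨by rw [h]; simpa using huv.1, fun hE => huv.2 ?_⟩
    have := congrArg (Sym2.map ψ) hE
    simpa using this

/-- Pull back a graph along an equivalence. -/
private def pullG (ψ : A ≃ A') (T : SimpleGraph A) : SimpleGraph A' where
  Adj p q := T.Adj (ψ.symm p) (ψ.symm q)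
  symm := ⟨fun _ _ h => h.symm⟩
  loopless := ⟨fun _ h => T.irrefl h⟩

private lemma isTree_pull (ψ : A ≃ A') (T : SimpleGraph A) (hT : T.IsTree) :
    (pullG ψ T).IsTree := by
  have h : ∀ u v, T.Adj u v ↔ (pullG ψ T).Adj (ψ u) (ψ v) := by
    intro u v; simp [pullG]
  exact ⟨connected_transfer ψ T _ h hT.isConnected, acyclic_transfer ψ T _ h hT.IsAcyclic⟩

private lemma count_del (H : SimpleGraph A) (K₂ : SimpleGraph A') (a b : A) (ψ : A ≃ A')
    (hiso : ∀ u v, (H.Adj u v ∧ s(u, v) ≠ s(a, b)) ↔ K₂.Adj (ψ u) (ψ v)) :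
    Nat.card {T : SimpleGraph A // T ≤ H ∧ T.IsTree ∧ ¬ T.Adj a b} = treeCount K₂ := by
  apply Nat.card_congr
  have hback : ∀ u v, (pullG ψ.symm K₂).Adj u v ↔ K₂.Adj (ψ u) (ψ v) := by
    intro u v; simp [pullG]
  refine ⟨fun T => ⟨pullG ψ T.1, ?_, isTree_pull ψ T.1 T.2.2.1⟩,
    fun T₂ => ⟨pullG ψ.symm T₂.1, ?_, isTree_pull ψ.symm T₂.1 T₂.2.2, ?_⟩, ?_, ?_⟩
  · -- pullG ψ T ≤ K₂
    obtain ⟨T, hle, htree, hnadj⟩ := T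
    intro p q h
    simp only [pullG] at h
    have hs : s(ψ.symm p, ψ.symm q) ≠ s(a, b) := by
      intro hE
      rcases Sym2.eq_iff.mp hE with ⟨h1, h2⟩ | ⟨h1, h2⟩
      · exact hnadj (h1 ▸ h2 ▸ h)
      · exact hnadj (h1 ▸ h2 ▸ h.symm)
    have := (hiso _ _).1 ⟨hle h, hs⟩
    simpa using this
  · -- pullG ψ.symm T₂ ≤ H
    obtain ⟨T₂, hle, htree⟩ := T₂
    intro u v h
    simp only [pullG, Equiv.symm_symm] at h
    exact ((hiso u v).2 (hle h)).1
  · -- ¬ Adj a b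
    obtain ⟨T₂, hle, htree⟩ := T₂
    intro h
    simp only [pullG, Equiv.symm_symm] at h
    exact ((hiso a b).2 (hle h)).2 rfl
  · intro T
    apply Subtype.ext
    ext u v
    simp [pullG]
  · intro T₂
    apply Subtype.ext
    ext p q
    simp [pullG]

/-- Contracted graph of a spanning tree. -/
private def fwdG (con : A → A') (a b : A) (T : SimpleGraph A) : SimpleGraph A' where
  Adj p q := p ≠ q ∧ ∃ u v, T.Adj u v ∧ s(u, v) ≠ s(a, b) ∧ con u = p ∧ con v = q
  symm := ⟨by
    rintro p q ⟨hne, u, v, h1, h2, rfl, rfl⟩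
    exact ⟨hne.symm, v, u, h1.symm, fun hE => h2 (by rw [Sym2.eq_swap]; exact hE), rfl, rfl⟩⟩
  loopless := ⟨fun p h => h.1 rfl⟩

/-- Expanded graph of a spanning tree of the contraction. -/
private def bwdG (H : SimpleGraph A) (con : A → A') (a b : A) (T₂ : SimpleGraph A') :
    SimpleGraph A where
  Adj u v := u ≠ v ∧ (s(u, v) = s(a, b) ∨ (H.Adj u v ∧ T₂.Adj (con u) (con v)))
  symm := ⟨by
    rintro u v ⟨hne, h | h⟩
    · exact ⟨hne.symm, Or.inl (by rw [Sym2.eq_swap]; exact h)⟩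
    · exact ⟨hne.symm, Or.inr ⟨h.1.symm, h.2.symm⟩⟩⟩
  loopless := ⟨fun u h => h.1 rfl⟩

private lemma count_con (H : SimpleGraph A) (K : SimpleGraph A') (con : A → A') (a b : A)
    (hab : H.Adj a b) (hcab : con a = con b)
    (hinj : ∀ u v, con u = con v → u = v ∨ (u = a ∧ v = b) ∨ (u = b ∧ v = a))
    (hsurj : ∀ p : A', ∃ u, con u = p)
    (hK : ∀ p q, K.Adj p q ↔
      p ≠ q ∧ ∃ u v, H.Adj u v ∧ s(u, v) ≠ s(a, b) ∧ con u = p ∧ con v = q)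
    (hcommon : ∀ u, ¬(H.Adj u a ∧ H.Adj u b)) :
    Nat.card {T : SimpleGraph A // T ≤ H ∧ T.IsTree ∧ T.Adj a b} = treeCount K := by
  classical
  have hne_ab : a ≠ b := hab.ne
  have F1 : ∀ u v, u ≠ v → s(u, v) ≠ s(a, b) → con u ≠ con v := by
    intro u v hne hs hc
    rcases hinj u v hc with h | ⟨rfl, rfl⟩ | ⟨rfl, rfl⟩
    · exact hne h
    · exact hs rfl
    · exact hs Sym2.eq_swap
  have F2 : ∀ (T : SimpleGraph A), T ≤ H → ∀ u v u' v', T.Adj u v → T.Adj u' v' →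
      s(u, v) ≠ s(a, b) → s(u', v') ≠ s(a, b) → con u = con u' → con v = con v' →
      u = u' ∧ v = v' := by
    intro T hle u v u' v' h1 h2 hs1 hs2 hcu hcv
    have hv : v = v' := by
      rcases hinj v v' hcv with h | ⟨rfl, rfl⟩ | ⟨rfl, rfl⟩
      · exact h
      · rcases hinj u u' hcu with rfl | ⟨rfl, rfl⟩ | ⟨rfl, rfl⟩
        · exact absurd ⟨hle h1, hle h2⟩ (hcommon _)
        · exact absurd rfl h1.ne
        · exact absurd Sym2.eq_swap hs1
      · rcases hinj u u' hcu with rfl | ⟨rfl, rfl⟩ | ⟨rfl, rfl⟩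
        · exact absurd ⟨hle h2, hle h1⟩ (hcommon _)
        · exact absurd rfl hs1
        · exact absurd rfl h1.ne
    subst hv
    rcases hinj u u' hcu with h | ⟨rfl, rfl⟩ | ⟨rfl, rfl⟩
    · exact ⟨h, rfl⟩
    · exact absurd ⟨(hle h1).symm, (hle h2).symm⟩ (hcommon _)
    · exact absurd ⟨(hle h2).symm, (hle h1).symm⟩ (hcommon _)
  have hfwd_le : ∀ T : SimpleGraph A, T ≤ H → fwdG con a b T ≤ K := by
    rintro T hle p q ⟨hne, u, v, h1, h2, h3, h4⟩
    exact (hK p q).2 ⟨hne, u, v, hle h1, h2, h3, h4⟩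
  have hbwd_le : ∀ T₂ : SimpleGraph A', bwdG H con a b T₂ ≤ H := by
    rintro T₂ u v ⟨hne, h⟩
    rcases h with hs | h2
    · rcases Sym2.eq_iff.mp hs with ⟨rfl, rfl⟩ | ⟨rfl, rfl⟩
      · exact hab
      · exact hab.symm
    · exact h2.1
  have hfwd_conn : ∀ T : SimpleGraph A, T.Connected → T.Adj a b →
      (fwdG con a b T).Connected := by
    intro T hc hTab
    haveI : Nonempty A' := ⟨con a⟩
    refine ⟨fun p q => ?_⟩
    obtain ⟨u, rfl⟩ := hsurj p
    obtain ⟨v, rfl⟩ := hsurj q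
    refine reach_push (f := con) ?_ (hc.preconnected u v)
    intro w w' hw
    by_cases hs : s(w, w') = s(a, b)
    · rcases Sym2.eq_iff.mp hs with ⟨rfl, rfl⟩ | ⟨rfl, rfl⟩
      · exact Or.inl hcab
      · exact Or.inl hcab.symm
    · exact Or.inr ⟨F1 w w' hw.ne hs, w, w', hw, hs, rfl, rfl⟩
  have hfwd_acyc : ∀ T : SimpleGraph A, T ≤ H → T.IsTree → T.Adj a b →
      (fwdG con a b T).IsAcyclic := by
    intro T hle hT hTab
    rw [isAcyclic_iff_forall_adj_isBridge]
    rintro p q ⟨hne, u, v, hTuv, hsuv, rfl, rfl⟩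
    rw [isBridge_iff]
    refine fun hreach => ?_
    have hTb := (isAcyclic_iff_forall_adj_isBridge.mp hT.IsAcyclic) hTuv
    rw [isBridge_iff] at hTb
    refine hTb ?_
    refine reach_lift (S := T \ fromEdgeSet {s(u, v)}) (f := con) ?_ ?_ hreach u v rfl rfl
    · intro w w' hc
      rcases hinj w w' hc with rfl | ⟨rfl, rfl⟩ | ⟨rfl, rfl⟩
      · exact Reachable.refl _
      · exact ((sdiff_single_adj T _ _ _).2 ⟨hTab, fun hE => hsuv hE.symm⟩).reachable
      · exact ((sdiff_single_adj T _ _ _).2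
          ⟨hTab.symm, fun hE => hsuv (hE.symm.trans Sym2.eq_swap)⟩).reachable
    · rintro p' q' hadj
      erw [sdiff_single_adj] at hadj
      obtain ⟨⟨hne', u', v', h1', h2', rfl, rfl⟩, hnepq⟩ := hadj
      refine ⟨u', v', rfl, rfl, ((sdiff_single_adj T _ u' v').2 ⟨h1', fun hE => hnepq ?_⟩).reachable⟩
      rcases Sym2.eq_iff.mp hE with ⟨rfl, rfl⟩ | ⟨rfl, rfl⟩
      · rfl
      · exact Sym2.eq_swap
  have hbwd_conn : ∀ T₂ : SimpleGraph A', T₂ ≤ K → T₂.Connected →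
      (bwdG H con a b T₂).Connected := by
    intro T₂ hle hc
    haveI : Nonempty A := ⟨a⟩
    refine ⟨fun u v => ?_⟩
    refine reach_lift (S := bwdG H con a b T₂) (f := con) ?_ ?_
      (hc.preconnected (con u) (con v)) u v rfl rfl
    · intro w w' hcw
      rcases hinj w w' hcw with rfl | ⟨rfl, rfl⟩ | ⟨rfl, rfl⟩
      · exact Reachable.refl _
      · exact Adj.reachable ⟨hne_ab, Or.inl rfl⟩
      · exact Adj.reachable ⟨hne_ab.symm, Or.inl Sym2.eq_swap⟩
    · intro p q h
      obtain ⟨hne, u', v', hH, hs, rfl, rfl⟩ := (hK _ _).1 (hle h)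
      exact ⟨u', v', rfl, rfl, (Adj.reachable ⟨hH.ne, Or.inr ⟨hH, h⟩⟩)⟩
  have hbwd_acyc : ∀ T₂ : SimpleGraph A', T₂ ≤ K → T₂.IsTree →
      (bwdG H con a b T₂).IsAcyclic := by
    intro T₂ hle hT₂
    set T := bwdG H con a b T₂ with hTdef
    have hTle : T ≤ H := hbwd_le T₂
    have case1 : ¬ (T \ fromEdgeSet {s(a, b)}).Reachable a b := by
      intro hreach
      obtain ⟨W₀⟩ := hreach
      obtain ⟨W', hW'⟩ := W₀.toPath
      cases W' with
      | nil => exact hne_ab rfl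
      | @cons _ w _ ha₁ W₁ =>
        rw [Walk.cons_isPath_iff] at hW'
        obtain ⟨hW₁p, hanot⟩ := hW'
        rw [sdiff_single_adj] at ha₁
        obtain ⟨hTaw, hsaw⟩ := ha₁
        have hwb : w ≠ b := fun h => hsaw (by rw [h])
        have hT2aw : T₂.Adj (con a) (con w) := by
          rcases hTaw.2 with hsw | h2
          · exact absurd hsw hsaw
          · exact h2.2
        have hmap : ∀ z z', (T \ fromEdgeSet {s(a, b)}).Adj z z' → T₂.Adj (con z) (con z') := by
          intro z z' h
          rw [sdiff_single_adj] at h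
          rcases h.1.2 with hsw | h2
          · exact absurd hsw h.2
          · exact h2.2
        let φ : (T \ fromEdgeSet {s(a, b)}) →g T₂ := ⟨con, fun h => hmap _ _ h⟩
        have hW₁'p : (W₁.map φ).IsPath := by
          rw [Walk.isPath_def] at hW₁p ⊢
          rw [Walk.support_map]
          refine List.Nodup.map_on ?_ hW₁p
          intro z hz z' hz' hcz
          rcases hinj z z' hcz with h | ⟨rfl, rfl⟩ | ⟨rfl, rfl⟩
          · exact h
          · exact absurd hz hanot
          · exact absurd hz' hanot
        have hpuniq := hT₂.IsAcyclic.path_unique (Path.singleton hT2aw)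
          ⟨((W₁.map φ).copy rfl hcab.symm).reverse, (((Walk.isPath_copy _ _ _).mpr hW₁'p).reverse)⟩
        have hlen := congrArg (fun P : T₂.Path (con a) (con w) => P.1.length) hpuniq
        simp [Path.singleton] at hlen
        cases W₁ with
        | nil => exact hwb rfl
        | @cons _ t _ ha₂ W₂ =>
          simp [Walk.length_cons] at hlen
          have htb := W₂.eq_of_length_eq_zero (Walk.nil_iff_length_eq.mp hlen)
          subst htb
          rw [sdiff_single_adj] at ha₂
          exact hcommon w ⟨(hTle hTaw).symm, hTle ha₂.1⟩
    rw [isAcyclic_iff_forall_adj_isBridge]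
    intro u v huv
    rw [isBridge_iff]
    refine fun hreach => ?_
    rcases huv.2 with hs | ⟨hH, hT2⟩
    · rcases Sym2.eq_iff.mp hs with ⟨rfl, rfl⟩ | ⟨rfl, rfl⟩
      · exact case1 hreach
      · have hE : s(u, v) = s(v, u) := Sym2.eq_swap
        rw [hE] at hreach
        exact case1 hreach.symm
    · have hsuv : s(u, v) ≠ s(a, b) := by
        intro hE
        rcases Sym2.eq_iff.mp hE with ⟨rfl, rfl⟩ | ⟨rfl, rfl⟩
        · exact hT2.ne hcab
        · exact hT2.ne hcab.symm
      have hbr := (isAcyclic_iff_forall_adj_isBridge.mp hT₂.IsAcyclic) hT2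
      rw [isBridge_iff] at hbr
      refine hbr ?_
      refine reach_push (f := con) (S := T \ fromEdgeSet {s(u, v)})
        (S' := T₂ \ fromEdgeSet {s(con u, con v)}) ?_ hreach
      intro w w' hw
      rw [sdiff_single_adj] at hw
      obtain ⟨hTw, hnw⟩ := hw
      rcases hTw.2 with hsw | ⟨hHw, hT2w⟩
      · rcases Sym2.eq_iff.mp hsw with ⟨rfl, rfl⟩ | ⟨rfl, rfl⟩
        · exact Or.inl hcab
        · exact Or.inl hcab.symm
      · refine Or.inr ((sdiff_single_adj _ _ _ _).2 ⟨hT2w, fun hE => ?_⟩)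
        have hswne : s(w, w') ≠ s(a, b) := by
          intro hE2
          rcases Sym2.eq_iff.mp hE2 with ⟨rfl, rfl⟩ | ⟨rfl, rfl⟩
          · exact hT2w.ne hcab
          · exact hT2w.ne hcab.symm
        rcases Sym2.eq_iff.mp hE with ⟨hc1, hc2⟩ | ⟨hc1, hc2⟩
        · obtain ⟨rfl, rfl⟩ := F2 T hTle w w' u v hTw huv hswne hsuv hc1 hc2
          exact hnw rfl
        · obtain ⟨rfl, rfl⟩ := F2 T hTle w w' v u hTw huv.symm hswne
            (fun h => hsuv (Sym2.eq_swap.trans h)) hc1 hc2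
          exact hnw Sym2.eq_swap
  have round1 : ∀ T : SimpleGraph A, T ≤ H → T.Adj a b →
      bwdG H con a b (fwdG con a b T) = T := by
    intro T hle hTab
    ext u v
    show (u ≠ v ∧ _) ↔ _
    constructor
    · rintro ⟨hne, hs | ⟨hH, hne2, u', v', h1, h2, hcu, hcv⟩⟩
      · rcases Sym2.eq_iff.mp hs with ⟨rfl, rfl⟩ | ⟨rfl, rfl⟩
        · exact hTab
        · exact hTab.symm
      · rcases hinj u' u hcu with rfl | ⟨rfl, rfl⟩ | ⟨rfl, rfl⟩
        · rcases hinj v' v hcv with rfl | ⟨rfl, rfl⟩ | ⟨rfl, rfl⟩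
          · exact h1
          · exact absurd ⟨hle h1, hH⟩ (hcommon _)
          · exact absurd ⟨hH, hle h1⟩ (hcommon _)
        · rcases hinj v' v hcv with rfl | ⟨rfl, rfl⟩ | ⟨rfl, rfl⟩
          · exact absurd ⟨(hle h1).symm, hH.symm⟩ (hcommon _)
          · exact absurd rfl h1.ne
          · exact absurd rfl h2
        · rcases hinj v' v hcv with rfl | ⟨rfl, rfl⟩ | ⟨rfl, rfl⟩
          · exact absurd ⟨hH.symm, (hle h1).symm⟩ (hcommon _)
          · exact absurd Sym2.eq_swap h2
          · exact absurd rfl h1.ne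
    · intro hT
      refine ⟨hT.ne, ?_⟩
      by_cases hs : s(u, v) = s(a, b)
      · exact Or.inl hs
      · exact Or.inr ⟨hle hT, F1 u v hT.ne hs, u, v, hT, hs, rfl, rfl⟩
  have round2 : ∀ T₂ : SimpleGraph A', T₂ ≤ K →
      fwdG con a b (bwdG H con a b T₂) = T₂ := by
    intro T₂ hle
    ext p q
    show (p ≠ q ∧ _) ↔ _
    constructor
    · rintro ⟨hne, u, v, hT, hs, rfl, rfl⟩
      rcases hT.2 with hs2 | h2
      · exact absurd hs2 hs
      · exact h2.2
    · intro h
      obtain ⟨hne, u, v, hH, hs, rfl, rfl⟩ := (hK _ _).1 (hle h)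
      exact ⟨hne, u, v, ⟨hH.ne, Or.inr ⟨hH, h⟩⟩, hs, rfl, rfl⟩
  apply Nat.card_congr
  refine ⟨fun T => ⟨fwdG con a b T.1, hfwd_le T.1 T.2.1,
      hfwd_conn T.1 T.2.2.1.isConnected T.2.2.2, hfwd_acyc T.1 T.2.1 T.2.2.1 T.2.2.2⟩,
    fun T₂ => ⟨bwdG H con a b T₂.1, hbwd_le T₂.1,
      ⟨hbwd_conn T₂.1 T₂.2.1 T₂.2.2.isConnected, hbwd_acyc T₂.1 T₂.2.1 T₂.2.2⟩,
      ⟨hne_ab, Or.inl rfl⟩⟩,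
    fun T => Subtype.ext (round1 T.1 T.2.1 T.2.2.2),
    fun T₂ => Subtype.ext (round2 T₂.1 T₂.2.1)⟩

end Abstract

section Concrete

variable (G : SimpleGraph V) (x y : V)

private lemma sub_adj_ll (u v : V) :
    (subdivideOnce G x y).Adj (Sum.inl u) (Sum.inl v) ↔ G.Adj u v ∧ s(u, v) ≠ s(x, y) := by
  rw [subdivideOnce, fromRel_adj]
  constructor
  · rintro ⟨hne, h | h⟩
    · exact h
    · exact ⟨h.1.symm, fun hE => h.2 (Sym2.eq_swap.trans hE)⟩
  · intro h
    exact ⟨by simpa using h.1.ne, Or.inl h⟩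

private lemma sub_adj_lr (u : V) (t : Unit) :
    (subdivideOnce G x y).Adj (Sum.inl u) (Sum.inr t) ↔ (u = x ∨ u = y) := by
  rw [subdivideOnce, fromRel_adj]
  constructor
  · rintro ⟨hne, h | h⟩
    · exact h
    · exact h.elim
  · intro h
    exact ⟨by simp, Or.inl h⟩

private lemma sub_adj_rr (t t' : Unit) :
    ¬ (subdivideOnce G x y).Adj (Sum.inr t) (Sum.inr t') := by
  rw [subdivideOnce, fromRel_adj]
  rintro ⟨hne, h | h⟩ <;> exact h.elim

private lemma sub_edge (z : Sym2 (V ⊕ Unit)) :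
    z ∈ (subdivideOnce G x y).edgeSet ↔
      (∃ u v, G.Adj u v ∧ s(u, v) ≠ s(x, y) ∧ z = s(Sum.inl u, Sum.inl v)) ∨
        z = s(Sum.inl x, Sum.inr ()) ∨ z = s(Sum.inl y, Sum.inr ()) := by
  constructor
  · intro h
    induction z using Sym2.ind with
    | _ p q =>
      rw [mem_edgeSet] at h
      rcases p with u | t <;> rcases q with v | t'
      · exact Or.inl ⟨u, v, ((sub_adj_ll G x y u v).1 h).1, ((sub_adj_ll G x y u v).1 h).2, rfl⟩
      · cases t'
        rcases (sub_adj_lr G x y u ()).1 h with rfl | rfl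
        · exact Or.inr (Or.inl rfl)
        · exact Or.inr (Or.inr rfl)
      · cases t
        rcases (sub_adj_lr G x y v ()).1 h.symm with rfl | rfl
        · exact Or.inr (Or.inl Sym2.eq_swap)
        · exact Or.inr (Or.inr Sym2.eq_swap)
      · exact absurd h (sub_adj_rr G x y t t')
  · rintro (⟨u, v, h1, h2, rfl⟩ | rfl | rfl)
    · exact (sub_adj_ll G x y u v).2 ⟨h1, h2⟩
    · exact (sub_adj_lr G x y x ()).2 (Or.inl rfl)
    · exact (sub_adj_lr G x y y ()).2 (Or.inr rfl)

private lemma pend_adj_ll (u v : V) :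
    (pendantize G {s(x, y)}).Adj (Sum.inl u) (Sum.inl v) ↔ G.Adj u v ∧ s(u, v) ≠ s(x, y) := by
  rw [pendantize, fromRel_adj]
  constructor
  · rintro ⟨hne, h | h⟩
    · exact ⟨h.1, by simpa using h.2⟩
    · exact ⟨h.1.symm, fun hE => h.2 (by simpa using Sym2.eq_swap.trans hE)⟩
  · intro h
    exact ⟨by simpa using h.1.ne, Or.inl ⟨h.1, by simpa using h.2⟩⟩

private lemma pend_adj_lr (u : V)
    (p : {p : Sym2 V × V // p.1 ∈ ({s(x, y)} : Set (Sym2 V)) ∧ p.2 ∈ p.1}) :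
    (pendantize G {s(x, y)}).Adj (Sum.inl u) (Sum.inr p) ↔ (p : Sym2 V × V).2 = u := by
  rw [pendantize, fromRel_adj]
  constructor
  · rintro ⟨hne, h | h⟩
    · exact h
    · exact h.elim
  · intro h
    exact ⟨by simp, Or.inl h⟩

private lemma pend_adj_rr
    (p p' : {p : Sym2 V × V // p.1 ∈ ({s(x, y)} : Set (Sym2 V)) ∧ p.2 ∈ p.1}) :
    ¬ (pendantize G {s(x, y)}).Adj (Sum.inr p) (Sum.inr p') := by
  rw [pendantize, fromRel_adj]
  rintro ⟨hne, h | h⟩ <;> exact h.elim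

end Concrete
section Concrete2

variable (G : SimpleGraph V) (x y : V)

private def PT (x y : V) := {p : Sym2 V × V // p.1 ∈ ({s(x, y)} : Set (Sym2 V)) ∧ p.2 ∈ p.1}

private def px : PT x y := ⟨(s(x, y), x), rfl, by simp⟩
private def py : PT x y := ⟨(s(x, y), y), rfl, by simp⟩

private lemma PT_cases (p : PT x y) : p = px x y ∨ p = py x y := by
  obtain ⟨⟨z, t⟩, h1, h2⟩ := p
  simp only [Set.mem_singleton_iff] at h1
  subst h1
  rcases Sym2.mem_iff.1 h2 with h | h
  · exact Or.inl (Subtype.ext (by simpa [px] using h))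
  · exact Or.inr (Subtype.ext (by simpa [py] using h))

private lemma pend_edge (z : Sym2 (V ⊕ PT x y)) :
    z ∈ (pendantize G {s(x, y)}).edgeSet ↔
      (∃ u v, G.Adj u v ∧ s(u, v) ≠ s(x, y) ∧ z = s(Sum.inl u, Sum.inl v)) ∨
        z = s(Sum.inl x, Sum.inr (px x y)) ∨ z = s(Sum.inl y, Sum.inr (py x y)) := by
  constructor
  · intro h
    induction z using Sym2.ind with
    | _ p q =>
      erw [mem_edgeSet] at h
      rcases p with u | t <;> rcases q with v | t'
      · exact Or.inl ⟨u, v, ((pend_adj_ll G x y u v).1 h).1, ((pend_adj_ll G x y u v).1 h).2, rfl⟩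
      · have ht := (pend_adj_lr G x y u t').1 h
        rcases PT_cases x y t' with rfl | rfl
        · rw [show u = x from ht.symm]
          exact Or.inr (Or.inl rfl)
        · rw [show u = y from ht.symm]
          exact Or.inr (Or.inr rfl)
      · have ht := (pend_adj_lr G x y v t).1 h.symm
        rcases PT_cases x y t with rfl | rfl
        · rw [show v = x from ht.symm]
          exact Or.inr (Or.inl Sym2.eq_swap)
        · rw [show v = y from ht.symm]
          exact Or.inr (Or.inr Sym2.eq_swap)
      · exact absurd h (pend_adj_rr G x y t t')
  · rintro (⟨u, v, h1, h2, rfl⟩ | rfl | rfl)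
    · exact (pend_adj_ll G x y u v).2 ⟨h1, h2⟩
    · exact (pend_adj_lr G x y x (px x y)).2 rfl
    · exact (pend_adj_lr G x y y (py x y)).2 rfl

/-- projection of subdivision-edges to `G`-edges -/
private def conAux (x y : V) : (V ⊕ Unit) → (V ⊕ Unit) → Sym2 V
  | Sum.inl u, Sum.inl v => s(u, v)
  | _, _ => s(x, y)

private lemma conAux_comm (x y : V) (p q : V ⊕ Unit) : conAux x y p q = conAux x y q p := by
  rcases p with u | t <;> rcases q with v | t' <;> simp [conAux, Sym2.eq_swap]

private def conFun (x y : V) : Sym2 (V ⊕ Unit) → Sym2 V :=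
  Sym2.lift ⟨conAux x y, conAux_comm x y⟩

@[simp] private lemma conFun_ll (u v : V) : conFun x y s(Sum.inl u, Sum.inl v) = s(u, v) := by
  simp [conFun, conAux]

@[simp] private lemma conFun_lr (u : V) (t : Unit) :
    conFun x y s(Sum.inl u, Sum.inr t) = s(x, y) := by
  simp [conFun, conAux]

private lemma conFun_map (g : Sym2 V) : conFun x y (Sym2.map Sum.inl g) = g := by
  induction g using Sym2.ind with
  | _ u v => simp [Sym2.map_pair_eq]

private def aE : (subdivideOnce G x y).edgeSet :=
  ⟨s(Sum.inl x, Sum.inr ()), (sub_edge G x y _).2 (Or.inr (Or.inl rfl))⟩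

private def bE : (subdivideOnce G x y).edgeSet :=
  ⟨s(Sum.inl y, Sum.inr ()), (sub_edge G x y _).2 (Or.inr (Or.inr rfl))⟩

private lemma conFun_mem (he : G.Adj x y) (z : Sym2 (V ⊕ Unit))
    (hz : z ∈ (subdivideOnce G x y).edgeSet) : conFun x y z ∈ G.edgeSet := by
  rcases (sub_edge G x y z).1 hz with ⟨u, v, h1, h2, rfl⟩ | rfl | rfl
  · rw [conFun_ll]; exact h1
  · rw [conFun_lr]; exact he
  · rw [conFun_lr]; exact he

private def conE (he : G.Adj x y) : (subdivideOnce G x y).edgeSet → G.edgeSet :=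
  fun z => ⟨conFun x y z.1, conFun_mem G x y he z.1 z.2⟩

end Concrete2

section Concrete3

variable (G : SimpleGraph V) (x y : V)

private lemma map_inl_mem (g : Sym2 V) (hg : g ∈ G.edgeSet) (hne : g ≠ s(x, y)) :
    Sym2.map Sum.inl g ∈ (subdivideOnce G x y).edgeSet := by
  revert hg hne
  induction g using Sym2.ind with
  | _ u v =>
    intro hg hne
    rw [Sym2.map_pair_eq, mem_edgeSet]
    exact (sub_adj_ll G x y u v).2 ⟨G.mem_edgeSet.1 hg, hne⟩

private lemma con_ab (he : G.Adj x y) :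
    conE G x y he (aE G x y) = conE G x y he (bE G x y) :=
  Subtype.ext (by simp [conE, aE, bE])

private lemma con_inj (he : G.Adj x y) (z w : (subdivideOnce G x y).edgeSet)
    (h : conE G x y he z = conE G x y he w) :
    z = w ∨ (z = aE G x y ∧ w = bE G x y) ∨ (z = bE G x y ∧ w = aE G x y) := by
  have hval : conFun x y z.1 = conFun x y w.1 := congrArg Subtype.val h
  rcases (sub_edge G x y z.1).1 z.2 with ⟨u, v, h1, h2, hz⟩ | hz | hz <;>
    rcases (sub_edge G x y w.1).1 w.2 with ⟨u', v', h1', h2', hw⟩ | hw | hw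
  · rw [hz, hw, conFun_ll, conFun_ll] at hval
    have : z.1 = w.1 := by
      rw [hz, hw, ← Sym2.map_pair_eq Sum.inl, ← Sym2.map_pair_eq Sum.inl, hval]
    exact Or.inl (Subtype.ext this)
  · rw [hz, hw, conFun_ll, conFun_lr] at hval
    exact absurd hval h2
  · rw [hz, hw, conFun_ll, conFun_lr] at hval
    exact absurd hval h2
  · rw [hz, hw, conFun_lr, conFun_ll] at hval
    exact absurd hval.symm h2'
  · exact Or.inl (Subtype.ext (hz.trans hw.symm))
  · exact Or.inr (Or.inl ⟨Subtype.ext hz, Subtype.ext hw⟩)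
  · rw [hz, hw, conFun_lr, conFun_ll] at hval
    exact absurd hval.symm h2'
  · exact Or.inr (Or.inr ⟨Subtype.ext hz, Subtype.ext hw⟩)
  · exact Or.inl (Subtype.ext (hz.trans hw.symm))

private lemma con_surj (he : G.Adj x y) (g : G.edgeSet) : ∃ z, conE G x y he z = g := by
  by_cases hg : g.1 = s(x, y)
  · exact ⟨aE G x y, Subtype.ext (by simp [conE, aE, hg])⟩
  · exact ⟨⟨Sym2.map Sum.inl g.1, map_inl_mem G x y g.1 g.2 hg⟩,
      Subtype.ext (by simp [conE, conFun_map])⟩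

private lemma hab_lemma (hxy : x ≠ y) :
    (SimpleGraph.lineGraph (subdivideOnce G x y)).Adj (aE G x y) (bE G x y) := by
  rw [lineGraph_adj_iff_exists]
  refine ⟨?_, Sum.inr (), by simp [aE], by simp [bE]⟩
  intro h
  have := congrArg Subtype.val h
  simp only [aE, bE, Sym2.eq_iff] at this
  rcases this with ⟨h1, _⟩ | ⟨h1, _⟩
  · exact hxy (by simpa using h1)
  · simp at h1

private lemma con_common (hxy : x ≠ y) (z : (subdivideOnce G x y).edgeSet) :
    ¬ ((SimpleGraph.lineGraph (subdivideOnce G x y)).Adj z (aE G x y) ∧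
       (SimpleGraph.lineGraph (subdivideOnce G x y)).Adj z (bE G x y)) := by
  rintro ⟨h1, h2⟩
  rw [lineGraph_adj_iff_exists] at h1 h2
  obtain ⟨hne1, t1, ht1, ht1'⟩ := h1
  obtain ⟨hne2, t2, ht2, ht2'⟩ := h2
  rcases (sub_edge G x y z.1).1 z.2 with ⟨u, v, hadj, hsne, hz⟩ | hz | hz
  · have hmem : ∀ (c : V) (t : V ⊕ Unit), t ∈ z.1 → t = Sum.inl c → c ∈ s(u, v) := by
      intro c t htz htc
      rw [hz, htc] at htz
      rcases Sym2.mem_iff.1 htz with h' | h'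
      · rw [Sym2.mem_iff]; exact Or.inl (Sum.inl.inj h')
      · rw [Sym2.mem_iff]; exact Or.inr (Sum.inl.inj h')
    have hnoinr : ∀ t : Unit, (Sum.inr t : V ⊕ Unit) ∉ z.1 := by
      intro t ht
      rw [hz] at ht
      rcases Sym2.mem_iff.1 ht with h' | h' <;> simp at h'
    have hx : x ∈ s(u, v) := by
      rcases Sym2.mem_iff.1 (show t1 ∈ s(Sum.inl x, Sum.inr ()) from by simpa [aE] using ht1')
        with h | h
      · exact hmem x t1 ht1 h
      · exact absurd (h ▸ ht1) (hnoinr ())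
    have hy : y ∈ s(u, v) := by
      rcases Sym2.mem_iff.1 (show t2 ∈ s(Sum.inl y, Sum.inr ()) from by simpa [bE] using ht2')
        with h | h
      · exact hmem y t2 ht2 h
      · exact absurd (h ▸ ht2) (hnoinr ())
    exact hsne ((Sym2.mem_and_mem_iff hxy).1 ⟨hx, hy⟩)
  · exact hne1 (Subtype.ext hz)
  · exact hne2 (Subtype.ext hz)

end Concrete3

section Concrete4

variable (G : SimpleGraph V) (x y : V)

private lemma exists_over (he : G.Adj x y) (p : G.edgeSet) (t : V) (ht : t ∈ p.1) :
    ∃ z, conE G x y he z = p ∧ Sum.inl t ∈ z.1 := by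
  by_cases hp : p.1 = s(x, y)
  · rw [hp] at ht
    rcases Sym2.mem_iff.1 ht with h | h
    · refine ⟨aE G x y, Subtype.ext ?_, ?_⟩
      · show conFun x y _ = p.1
        rw [hp]
        exact conFun_lr x y x ()
      · rw [h]
        simp [aE]
    · refine ⟨bE G x y, Subtype.ext ?_, ?_⟩
      · show conFun x y _ = p.1
        rw [hp]
        exact conFun_lr x y y ()
      · rw [h]
        simp [bE]
  · exact ⟨⟨Sym2.map Sum.inl p.1, map_inl_mem G x y p.1 p.2 hp⟩,
      Subtype.ext (by simp [conE, conFun_map]), Sym2.mem_map.2 ⟨t, ht, rfl⟩⟩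

private lemma shared_push (he : G.Adj x y) (z w : (subdivideOnce G x y).edgeSet)
    (t' : V ⊕ Unit) (h1 : t' ∈ z.1) (h2 : t' ∈ w.1) :
    ∃ t : V, t ∈ (conE G x y he z).1 ∧ t ∈ (conE G x y he w).1 := by
  rcases t' with t | tt
  · have key : ∀ z : (subdivideOnce G x y).edgeSet, Sum.inl t ∈ z.1 →
        t ∈ (conE G x y he z).1 := by
      intro z hz
      rcases (sub_edge G x y z.1).1 z.2 with ⟨u, v, hadj, hsne, hzz⟩ | hzz | hzz
      · show t ∈ conFun x y z.1
        rw [hzz, conFun_ll]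
        rw [hzz] at hz
        rcases Sym2.mem_iff.1 hz with h | h
        · rw [Sym2.mem_iff]; exact Or.inl (Sum.inl.inj h)
        · rw [Sym2.mem_iff]; exact Or.inr (Sum.inl.inj h)
      · show t ∈ conFun x y z.1
        rw [hzz, conFun_lr]
        rw [hzz] at hz
        rcases Sym2.mem_iff.1 hz with h | h
        · rw [Sym2.mem_iff]; exact Or.inl (Sum.inl.inj h)
        · simp at h
      · show t ∈ conFun x y z.1
        rw [hzz, conFun_lr]
        rw [hzz] at hz
        rcases Sym2.mem_iff.1 hz with h | h
        · rw [Sym2.mem_iff]; exact Or.inr (Sum.inl.inj h)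
        · simp at h
    exact ⟨t, key z h1, key w h2⟩
  · have key : ∀ z : (subdivideOnce G x y).edgeSet, Sum.inr tt ∈ z.1 →
        x ∈ (conE G x y he z).1 := by
      intro z hz
      rcases (sub_edge G x y z.1).1 z.2 with ⟨u, v, hadj, hsne, hzz⟩ | hzz | hzz
      · rw [hzz] at hz
        rcases Sym2.mem_iff.1 hz with h | h <;> simp at h
      · show x ∈ conFun x y z.1
        rw [hzz, conFun_lr, Sym2.mem_iff]
        exact Or.inl rfl
      · show x ∈ conFun x y z.1
        rw [hzz, conFun_lr, Sym2.mem_iff]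
        exact Or.inl rfl
    exact ⟨x, key z h1, key w h2⟩

private lemma hK_lemma (he : G.Adj x y) (p q : G.edgeSet) :
    (SimpleGraph.lineGraph G).Adj p q ↔ p ≠ q ∧
      ∃ z w, (SimpleGraph.lineGraph (subdivideOnce G x y)).Adj z w ∧
        s(z, w) ≠ s(aE G x y, bE G x y) ∧ conE G x y he z = p ∧ conE G x y he w = q := by
  constructor
  · intro h
    rw [lineGraph_adj_iff_exists] at h
    obtain ⟨hne, t, ht1, ht2⟩ := h
    obtain ⟨z, hz, hz2⟩ := exists_over G x y he p t ht1
    obtain ⟨w, hw, hw2⟩ := exists_over G x y he q t ht2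
    refine ⟨hne, z, w, ?_, ?_, hz, hw⟩
    · rw [lineGraph_adj_iff_exists]
      exact ⟨fun hE => hne (by rw [← hz, ← hw, hE]), Sum.inl t, hz2, hw2⟩
    · intro hE
      rcases Sym2.eq_iff.mp hE with ⟨hza, hwb⟩ | ⟨hzb, hwa⟩
      · exact hne (by rw [← hz, ← hw, hza, hwb, con_ab])
      · exact hne (by rw [← hz, ← hw, hzb, hwa, ← con_ab])
  · rintro ⟨hne, z, w, hzw, hsab, rfl, rfl⟩
    rw [lineGraph_adj_iff_exists] at hzw ⊢
    obtain ⟨hzwne, t', h1, h2⟩ := hzw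
    exact ⟨hne, shared_push G x y he z w t' h1 h2⟩

end Concrete4

section Concrete5

variable (G : SimpleGraph V) (x y : V)

private lemma px_ne_py (hxy : x ≠ y) : px x y ≠ py x y := by
  intro h
  have := congrArg (fun p : PT x y => p.1.2) h
  exact hxy this

private def pxE : (pendantize G {s(x, y)}).edgeSet :=
  ⟨s(Sum.inl x, Sum.inr (px x y)), (pend_edge G x y _).2 (Or.inr (Or.inl rfl))⟩

private def pyE : (pendantize G {s(x, y)}).edgeSet :=
  ⟨s(Sum.inl y, Sum.inr (py x y)), (pend_edge G x y _).2 (Or.inr (Or.inr rfl))⟩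

private lemma pxE_ne_pyE (hxy : x ≠ y) : pxE G x y ≠ pyE G x y := by
  intro h
  have := congrArg Subtype.val h
  simp only [pxE, pyE, Sym2.eq_iff] at this
  rcases this with ⟨h1, h2⟩ | ⟨h1, h2⟩
  · exact px_ne_py x y hxy (Sum.inr.inj h2)
  · simp at h1

private lemma not_ab_eq (z : (subdivideOnce G x y).edgeSet) (h1 : z ≠ aE G x y)
    (h2 : z ≠ bE G x y) :
    ∃ u v, G.Adj u v ∧ s(u, v) ≠ s(x, y) ∧ z.1 = s(Sum.inl u, Sum.inl v) := by
  rcases (sub_edge G x y z.1).1 z.2 with h | h | h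
  · exact h
  · exact absurd (Subtype.ext h) h1
  · exact absurd (Subtype.ext h) h2

private def sMap (x y : V) : (V ⊕ Unit) → (V ⊕ PT x y) := Sum.map id (fun _ => px x y)

private lemma F_mem (z : (subdivideOnce G x y).edgeSet) (h1 : z ≠ aE G x y)
    (h2 : z ≠ bE G x y) :
    Sym2.map (sMap x y) z.1 ∈ (pendantize G {s(x, y)}).edgeSet := by
  obtain ⟨u, v, hadj, hne, hz⟩ := not_ab_eq G x y z h1 h2
  rw [hz, Sym2.map_pair_eq]
  exact (pend_edge G x y _).2 (Or.inl ⟨u, v, hadj, hne, by simp [sMap]⟩)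

private noncomputable def FE : (subdivideOnce G x y).edgeSet →
    (pendantize G {s(x, y)}).edgeSet := fun z =>
  letI := Classical.dec (z = aE G x y)
  letI := Classical.dec (z = bE G x y)
  if h1 : z = aE G x y then pxE G x y
  else if h2 : z = bE G x y then pyE G x y
  else ⟨Sym2.map (sMap x y) z.1, F_mem G x y z h1 h2⟩

private lemma FE_a : FE G x y (aE G x y) = pxE G x y := by
  simp [FE]

private lemma FE_b (hab : aE G x y ≠ bE G x y) : FE G x y (bE G x y) = pyE G x y := by
  simp [FE, hab.symm]

private lemma FE_other (z : (subdivideOnce G x y).edgeSet) (h1 : z ≠ aE G x y)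
    (h2 : z ≠ bE G x y) :
    (FE G x y z).1 = Sym2.map (sMap x y) z.1 := by
  simp [FE, h1, h2]
  rfl

private lemma ll_ne (u v c : V) (t : Unit) :
    (s(Sum.inl u, Sum.inl v) : Sym2 (V ⊕ Unit)) ≠ s(Sum.inl c, Sum.inr t) := by
  simp [Sym2.eq_iff]

private lemma llp_ne (u v c : V) (t : PT x y) :
    (s(Sum.inl u, Sum.inl v) : Sym2 (V ⊕ PT x y)) ≠ s(Sum.inl c, Sum.inr t) := by
  simp [Sym2.eq_iff]

private lemma ab_ne' (hxy : x ≠ y) : aE G x y ≠ bE G x y := by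
  intro h
  have := congrArg Subtype.val h
  simp only [aE, bE, Sym2.eq_iff] at this
  rcases this with ⟨h1, _⟩ | ⟨h1, _⟩
  · exact hxy (by simpa using h1)
  · simp at h1

private lemma FE_inj (hxy : x ≠ y) : Function.Injective (FE G x y) := by
  have hab : aE G x y ≠ bE G x y := ab_ne' G x y hxy
  intro z w h
  rcases eq_or_ne z (aE G x y) with rfl | hz1
  · rcases eq_or_ne w (aE G x y) with rfl | hw1
    · rfl
    rcases eq_or_ne w (bE G x y) with rfl | hw2
    · rw [FE_a, FE_b G x y hab] at h
      exact absurd h (pxE_ne_pyE G x y hxy)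
    · rw [FE_a] at h
      obtain ⟨u, v, _, _, hw⟩ := not_ab_eq G x y w hw1 hw2
      have := congrArg Subtype.val h
      rw [FE_other G x y w hw1 hw2, hw, Sym2.map_pair_eq] at this
      exact absurd this.symm (llp_ne x y u v x (px x y))
  rcases eq_or_ne z (bE G x y) with rfl | hz2
  · rcases eq_or_ne w (aE G x y) with rfl | hw1
    · rw [FE_a, FE_b G x y hab] at h
      exact absurd h.symm (pxE_ne_pyE G x y hxy)
    rcases eq_or_ne w (bE G x y) with rfl | hw2
    · rfl
    · rw [FE_b G x y hab] at h
      obtain ⟨u, v, _, _, hw⟩ := not_ab_eq G x y w hw1 hw2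
      have := congrArg Subtype.val h
      rw [FE_other G x y w hw1 hw2, hw, Sym2.map_pair_eq] at this
      exact absurd this.symm (llp_ne x y u v y (py x y))
  · rcases eq_or_ne w (aE G x y) with rfl | hw1
    · rw [FE_a] at h
      obtain ⟨u, v, _, _, hz⟩ := not_ab_eq G x y z hz1 hz2
      have := congrArg Subtype.val h
      rw [FE_other G x y z hz1 hz2, hz, Sym2.map_pair_eq] at this
      exact absurd this (llp_ne x y u v x (px x y))
    rcases eq_or_ne w (bE G x y) with rfl | hw2
    · rw [FE_b G x y hab] at h
      obtain ⟨u, v, _, _, hz⟩ := not_ab_eq G x y z hz1 hz2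
      have := congrArg Subtype.val h
      rw [FE_other G x y z hz1 hz2, hz, Sym2.map_pair_eq] at this
      exact absurd this (llp_ne x y u v y (py x y))
    · obtain ⟨u, v, _, _, hz⟩ := not_ab_eq G x y z hz1 hz2
      obtain ⟨u', v', _, _, hw⟩ := not_ab_eq G x y w hw1 hw2
      have := congrArg Subtype.val h
      rw [FE_other G x y z hz1 hz2, FE_other G x y w hw1 hw2, hz, hw,
        Sym2.map_pair_eq, Sym2.map_pair_eq] at this
      replace this : (s(Sum.inl u, Sum.inl v) : Sym2 (V ⊕ PT x y)) = s(Sum.inl u', Sum.inl v') := this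
      simp only [sMap, Sum.map_inl, id, Sym2.eq_iff, Sum.inl.injEq] at this
      apply Subtype.ext
      rw [hz, hw]
      rcases this with ⟨rfl, rfl⟩ | ⟨rfl, rfl⟩
      · rfl
      · exact Sym2.eq_swap

private lemma FE_surj (hxy : x ≠ y) : Function.Surjective (FE G x y) := by
  have hab : aE G x y ≠ bE G x y := ab_ne' G x y hxy
  intro w
  rcases (pend_edge G x y w.1).1 w.2 with ⟨u, v, hadj, hne, hw⟩ | hw | hw
  · have hzmem : s(Sum.inl u, Sum.inl v) ∈ (subdivideOnce G x y).edgeSet :=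
      (sub_edge G x y _).2 (Or.inl ⟨u, v, hadj, hne, rfl⟩)
    refine ⟨⟨s(Sum.inl u, Sum.inl v), hzmem⟩, ?_⟩
    have h1 : (⟨s(Sum.inl u, Sum.inl v), hzmem⟩ : (subdivideOnce G x y).edgeSet) ≠ aE G x y :=
      fun h => ll_ne u v x () (congrArg Subtype.val h)
    have h2 : (⟨s(Sum.inl u, Sum.inl v), hzmem⟩ : (subdivideOnce G x y).edgeSet) ≠ bE G x y :=
      fun h => ll_ne u v y () (congrArg Subtype.val h)
    apply Subtype.ext
    rw [FE_other G x y _ h1 h2, hw, Sym2.map_pair_eq]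
    simp [sMap]
    rfl
  · exact ⟨aE G x y, by rw [FE_a]; exact Subtype.ext hw.symm⟩
  · exact ⟨bE G x y, by rw [FE_b G x y hab]; exact Subtype.ext hw.symm⟩

private lemma L1 (hxy : x ≠ y) (z : (subdivideOnce G x y).edgeSet) (t : V) :
    Sum.inl t ∈ z.1 ↔ Sum.inl t ∈ (FE G x y z).1 := by
  rcases eq_or_ne z (aE G x y) with rfl | hz1
  · rw [FE_a]
    show Sum.inl t ∈ (aE G x y).1 ↔ Sum.inl t ∈ (pxE G x y).1
    simp [aE, pxE, Sym2.mem_iff]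
  rcases eq_or_ne z (bE G x y) with rfl | hz2
  · rw [FE_b G x y (ab_ne' G x y hxy)]
    show Sum.inl t ∈ (bE G x y).1 ↔ Sum.inl t ∈ (pyE G x y).1
    simp [bE, pyE, Sym2.mem_iff]
  · obtain ⟨u, v, _, _, hz⟩ := not_ab_eq G x y z hz1 hz2
    rw [FE_other G x y z hz1 hz2, hz, Sym2.map_pair_eq]
    simp [sMap, Sym2.mem_iff]
    exact (by simp : t = u ∨ t = v ↔ (Sum.inl t : V ⊕ PT x y) ∈ s(Sum.inl u, Sum.inl v))

private lemma L2 (z : (subdivideOnce G x y).edgeSet) (tt : Unit) :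
    Sum.inr tt ∈ z.1 ↔ z = aE G x y ∨ z = bE G x y := by
  constructor
  · intro h
    rcases (sub_edge G x y z.1).1 z.2 with ⟨u, v, _, _, hz⟩ | hz | hz
    · rw [hz] at h
      rcases Sym2.mem_iff.1 h with h' | h' <;> simp at h'
    · exact Or.inl (Subtype.ext hz)
    · exact Or.inr (Subtype.ext hz)
  · rintro (rfl | rfl)
    · show _ ∈ s(Sum.inl x, Sum.inr ())
      rw [Sym2.mem_iff]
      exact Or.inr rfl
    · show _ ∈ s(Sum.inl y, Sum.inr ())
      rw [Sym2.mem_iff]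
      exact Or.inr rfl

private lemma L3 (hxy : x ≠ y) (z : (subdivideOnce G x y).edgeSet) (p : PT x y)
    (h : Sum.inr p ∈ (FE G x y z).1) :
    (z = aE G x y ∧ p = px x y) ∨ (z = bE G x y ∧ p = py x y) := by
  rcases eq_or_ne z (aE G x y) with rfl | hz1
  · rw [FE_a] at h
    rcases Sym2.mem_iff.1 h with h' | h'
    · simp at h'
    · exact Or.inl ⟨rfl, Sum.inr.inj h'⟩
  rcases eq_or_ne z (bE G x y) with rfl | hz2
  · rw [FE_b G x y (ab_ne' G x y hxy)] at h
    rcases Sym2.mem_iff.1 h with h' | h'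
    · simp at h'
    · exact Or.inr ⟨rfl, Sum.inr.inj h'⟩
  · obtain ⟨u, v, _, _, hz⟩ := not_ab_eq G x y z hz1 hz2
    rw [FE_other G x y z hz1 hz2, hz, Sym2.map_pair_eq] at h
    rcases Sym2.mem_iff.1 h with h' | h' <;> simp [sMap] at h'

private lemma hiso_lemma (hxy : x ≠ y) (z w : (subdivideOnce G x y).edgeSet) :
    ((SimpleGraph.lineGraph (subdivideOnce G x y)).Adj z w ∧
        s(z, w) ≠ s(aE G x y, bE G x y)) ↔
      (SimpleGraph.lineGraph (pendantize G {s(x, y)})).Adj (FE G x y z) (FE G x y w) := by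
  constructor
  · rintro ⟨hzw, hsab⟩
    rw [lineGraph_adj_iff_exists] at hzw
    obtain ⟨hne, t', h1, h2⟩ := hzw
    rw [lineGraph_adj_iff_exists]
    refine ⟨fun h => hne (FE_inj G x y hxy h), ?_⟩
    rcases t' with t | tt
    · exact ⟨Sum.inl t, (L1 G x y hxy z t).1 h1, (L1 G x y hxy w t).1 h2⟩
    · rcases (L2 G x y z tt).1 h1 with rfl | rfl <;> rcases (L2 G x y w tt).1 h2 with rfl | rfl
      · exact absurd rfl hne
      · exact absurd rfl hsab
      · exact absurd Sym2.eq_swap hsab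
      · exact absurd rfl hne
  · intro h
    rw [lineGraph_adj_iff_exists] at h
    obtain ⟨hne, t', h1, h2⟩ := h
    have hzw : z ≠ w := fun h => hne (congrArg (FE G x y) h)
    constructor
    · rw [lineGraph_adj_iff_exists]
      refine ⟨hzw, ?_⟩
      rcases t' with t | p
      · exact ⟨Sum.inl t, (L1 G x y hxy z t).2 h1, (L1 G x y hxy w t).2 h2⟩
      · rcases L3 G x y hxy z p h1 with ⟨rfl, rfl⟩ | ⟨rfl, rfl⟩ <;>
          rcases L3 G x y hxy w _ h2 with ⟨rfl, hp⟩ | ⟨rfl, hp⟩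
        · exact absurd rfl hzw
        · exact absurd hp (px_ne_py x y hxy)
        · exact absurd hp.symm (px_ne_py x y hxy)
        · exact absurd rfl hzw
    · intro hE
      rcases Sym2.eq_iff.mp hE with ⟨rfl, rfl⟩ | ⟨rfl, rfl⟩
      · rw [FE_a] at h1
        rw [FE_b G x y (ab_ne' G x y hxy)] at h2
        rcases Sym2.mem_iff.1 h1 with h' | h' <;> rcases Sym2.mem_iff.1 h2 with h'' | h'' <;>
          rw [h''] at h'
        · exact hxy (by simpa using h'.symm)
        · simp at h'
        · simp at h'
        · have hpp : py x y = px x y := Sum.inr.inj h'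
          exact px_ne_py x y hxy hpp.symm
      · rw [FE_b G x y (ab_ne' G x y hxy)] at h1
        rw [FE_a] at h2
        rcases Sym2.mem_iff.1 h1 with h' | h' <;> rcases Sym2.mem_iff.1 h2 with h'' | h'' <;>
          rw [h''] at h'
        · have hyx : x = y := by simpa using h'
          exact hxy hyx
        · simp at h'
        · simp at h'
        · have hpp : px x y = py x y := Sum.inr.inj h'
          exact px_ne_py x y hxy hpp

end Concrete5

section Bridge

variable (G : SimpleGraph V) (x y : V)

private lemma edge_reach {W : Type*} (K : SimpleGraph W) (z : Sym2 W) (hz : z ∈ K.edgeSet)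
    (u v : W) (hu : u ∈ z) (hv : v ∈ z) : K.Reachable u v := by
  rcases eq_or_ne u v with rfl | hne
  · exact Reachable.refl _
  · have hzz : z = s(u, v) := (Sym2.mem_and_mem_iff hne).1 ⟨hu, hv⟩
    rw [hzz] at hz
    exact (K.mem_edgeSet.1 hz).reachable

private lemma line_reach {W : Type*} (K : SimpleGraph W) {z w : K.edgeSet}
    (h : (SimpleGraph.lineGraph K).Reachable z w) :
    ∀ u v : W, u ∈ z.1 → v ∈ w.1 → K.Reachable u v := by
  obtain ⟨p⟩ := h
  induction p with
  | nil =>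
      intro u v hu hv
      exact edge_reach K _ (Subtype.coe_prop _) u v hu hv
  | cons ha q ih =>
      intro u v hu hv
      obtain ⟨_, t, ht1, ht2⟩ := lineGraph_adj_iff_exists.1 ha
      exact (edge_reach K _ (Subtype.coe_prop _) u t hu ht1).trans (ih t v ht2 hv)

private lemma pend_disconnected (hbr : G.IsBridge s(x, y)) :
    ¬ (SimpleGraph.lineGraph (pendantize G {s(x, y)})).Reachable (pxE G x y) (pyE G x y) := by
  intro h
  have hreach := line_reach _ h (Sum.inl x) (Sum.inl y)
    (by simp [pxE, Sym2.mem_iff]) (by simp [pyE, Sym2.mem_iff])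
  have hproj := reach_push (S := pendantize G {s(x, y)}) (S' := G \ fromEdgeSet {s(x, y)})
    (f := Sum.elim id (fun p => (p : Sym2 V × V).2)) ?_ hreach
  · exact isBridge_iff.1 hbr hproj
  · rintro (u | p) (v | q) hadj
    · exact Or.inr ((sdiff_single_adj G s(x, y) u v).2
        (by simpa using (pend_adj_ll G x y u v).1 hadj))
    · exact Or.inl ((pend_adj_lr G x y u q).1 hadj).symm
    · exact Or.inl ((pend_adj_lr G x y v p).1 hadj.symm)
    · exact absurd hadj (pend_adj_rr G x y p q)

private lemma pend_count_zero (hbr : G.IsBridge s(x, y)) :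
    treeCount (SimpleGraph.lineGraph (pendantize G {s(x, y)})) = 0 := by
  rw [treeCount, Nat.card_eq_zero]
  left
  refine ⟨?_⟩
  rintro ⟨T, hle, htree⟩
  exact pend_disconnected G x y hbr
    (Reachable.mono hle (htree.isConnected.preconnected (pxE G x y) (pyE G x y)))

end Bridge

/-- For a finite graph `G` with an edge `xy`:
`t(L(G_{•e})) = t(L(G)) + t(L(G_{−e}))`, and if `xy` is a bridge then
`t(L(G_{•e})) = t(L(G))`. -/
theorem stmt13 [Fintype V] (G : SimpleGraph V) (x y : V) (he : G.Adj x y) :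
    treeCount (SimpleGraph.lineGraph (subdivideOnce G x y)) =
        treeCount (SimpleGraph.lineGraph G) +
          treeCount (SimpleGraph.lineGraph (pendantize G {s(x, y)})) ∧
      (G.IsBridge s(x, y) →
        treeCount (SimpleGraph.lineGraph (subdivideOnce G x y)) =
          treeCount (SimpleGraph.lineGraph G)) := by
  classical
  have hxy : x ≠ y := he.ne
  have hcon := count_con (SimpleGraph.lineGraph (subdivideOnce G x y))
    (SimpleGraph.lineGraph G) (conE G x y he) (aE G x y) (bE G x y)
    (hab_lemma G x y hxy) (con_ab G x y he) (con_inj G x y he) (con_surj G x y he)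
    (hK_lemma G x y he) (con_common G x y hxy)
  have hdel := count_del (SimpleGraph.lineGraph (subdivideOnce G x y))
    (SimpleGraph.lineGraph (pendantize G {s(x, y)})) (aE G x y) (bE G x y)
    (Equiv.ofBijective (FE G x y) ⟨FE_inj G x y hxy, FE_surj G x y hxy⟩)
    (fun u v => hiso_lemma G x y hxy u v)
  have hmain : treeCount (SimpleGraph.lineGraph (subdivideOnce G x y)) =
      treeCount (SimpleGraph.lineGraph G) +
        treeCount (SimpleGraph.lineGraph (pendantize G {s(x, y)})) := by
    calc treeCount (SimpleGraph.lineGraph (subdivideOnce G x y))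
        = Nat.card {T : SimpleGraph (subdivideOnce G x y).edgeSet //
              (T ≤ SimpleGraph.lineGraph (subdivideOnce G x y) ∧ T.IsTree) ∧
                T.Adj (aE G x y) (bE G x y)} +
          Nat.card {T : SimpleGraph (subdivideOnce G x y).edgeSet //
              (T ≤ SimpleGraph.lineGraph (subdivideOnce G x y) ∧ T.IsTree) ∧
                ¬ T.Adj (aE G x y) (bE G x y)} :=
          nat_card_split _ _
      _ = Nat.card {T : SimpleGraph (subdivideOnce G x y).edgeSet //
              T ≤ SimpleGraph.lineGraph (subdivideOnce G x y) ∧ T.IsTree ∧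
                T.Adj (aE G x y) (bE G x y)} +
          Nat.card {T : SimpleGraph (subdivideOnce G x y).edgeSet //
              T ≤ SimpleGraph.lineGraph (subdivideOnce G x y) ∧ T.IsTree ∧
                ¬ T.Adj (aE G x y) (bE G x y)} := by
          exact congrArg₂ (· + ·)
            (Nat.card_congr (Equiv.subtypeEquivRight fun T => and_assoc))
            (Nat.card_congr (Equiv.subtypeEquivRight fun T => and_assoc))
      _ = treeCount (SimpleGraph.lineGraph G) +
            treeCount (SimpleGraph.lineGraph (pendantize G {s(x, y)})) := by
          rw [hcon, hdel]
  refine ⟨hmain, fun hbr => ?_⟩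
  rw [hmain, pend_count_zero G x y hbr, add_zero]
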